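/- For q ∈ (0,1) and N = ⌈1/p*⌉ where p* ∈ (0, 1/2] satisfies q = log(1-p*)/log(p*), the following inequality chain holds: log(N)/((N+1)/2 + (1-q)/q) ≥ q·log(N)/(N·q + 1 - q) ≥ -q·p*·log(p*)/(q + p*(1-q)). -/

import Mathlib

lemma log_le_half_sub (x : ℝ) (hx : 1 ≤ x) : Real.log x ≤ (x - x⁻¹) / 2 := by
  have h0 : (0:ℝ) < x := lt_of_lt_of_le one_pos hx
  have h1 : Real.log x ≤ Real.sinh (Real.log x) :=
    (Real.self_le_sinh_iff).2 (Real.log_nonneg hx)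
  rwa [Real.sinh_log h0] at h1

lemma quad_le_log (u : ℝ) (hu0 : 0 ≤ u) (hu : u ≤ 1/2) :
    u - u^2/2 ≤ Real.log (1 + u) := by
  set t := Real.log (1 + u) with ht
  have h1u : (0:ℝ) < 1 + u := by linarith
  have ht0 : 0 ≤ t := Real.log_nonneg (by linarith)
  have htu : t ≤ u := by
    have := Real.log_le_sub_one_of_pos h1u
    linarith
  have hexp : Real.exp t = 1 + u := Real.exp_log h1u
  have ht1 : |t| ≤ 1 := by rw [abs_of_nonneg ht0]; linarith
  have hub := Real.exp_bound ht1 (n := 4) (by norm_num)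
  have hlb := Real.sum_le_exp_of_nonneg ht0 4
  rw [Finset.sum_range_succ, Finset.sum_range_succ, Finset.sum_range_succ,
    Finset.sum_range_succ, Finset.sum_range_zero] at hub hlb
  simp only [pow_zero, pow_one, Nat.factorial] at hub hlb
  norm_num at hub hlb
  rw [abs_of_nonneg ht0, abs_sub_le_iff] at hub
  obtain ⟨hub1, _⟩ := hub
  have hu_ub : u ≤ t + t^2/2 + t^3/6 + 5*t^4/96 := by nlinarith [hexp]
  have hu_lb : t + t^2/2 + t^3/6 ≤ u := by nlinarith [hexp]
  nlinarith [sq_nonneg t, sq_nonneg (t^2), pow_nonneg ht0 3, pow_nonneg ht0 4,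
    pow_nonneg ht0 5, pow_nonneg ht0 6, mul_nonneg ht0 ht0,
    sq_nonneg (u - t), mul_le_mul_of_nonneg_left htu ht0]

set_option maxHeartbeats 1000000 in
theorem stmt_11 (q p : ℝ) (hq0 : 0 < q) (hq1 : q < 1)
    (hp0 : 0 < p) (hp : p ≤ 1 / 2)
    (hfoc : q = Real.log (1 - p) / Real.log p)
    (N : ℕ) (hN : N = ⌈1 / p⌉₊) :
    Real.log N / (((N : ℝ) + 1) / 2 + (1 - q) / q) ≥
      q * Real.log N / ((N : ℝ) * q + 1 - q) ∧
    q * Real.log N / ((N : ℝ) * q + 1 - q) ≥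
      -(q * p * Real.log p) / (q + p * (1 - q)) := by
  have hp1 : p < 1 := by linarith
  have h1p : (0:ℝ) < 1 - p := by linarith
  set L : ℝ := -Real.log p with hLdef
  set r : ℝ := -Real.log (1 - p) with hrdef
  have hL : 0 < L := by
    have := Real.log_neg hp0 hp1; simp [hLdef]; linarith
  have hr : 0 < r := by
    have := Real.log_neg h1p (by linarith); simp [hrdef]; linarith
  have hlogp : Real.log p = -L := by simp [hLdef]
  have hqL : q * L = r := by
    have hlp : Real.log p ≠ 0 := by rw [hlogp]; exact neg_ne_zero.2 hL.ne'
    have h : q * Real.log p = Real.log (1 - p) := by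
      rw [hfoc]; field_simp
    simp only [hLdef, hrdef]; linarith [h]
  -- basic facts about N
  have hNge : 1 / p ≤ (N:ℝ) := by rw [hN]; exact Nat.le_ceil _
  have hNlt : (N:ℝ) < 1 / p + 1 := by rw [hN]; exact Nat.ceil_lt_add_one (by positivity)
  have hp2 : (2:ℝ) ≤ 1 / p := by rw [le_div_iff₀ hp0]; linarith
  have hN1 : (1:ℝ) ≤ (N:ℝ) := by linarith
  have hM0 : 0 ≤ Real.log N := Real.log_nonneg hN1
  set M : ℝ := Real.log N with hMdef
  -- u
  set u : ℝ := p * (N:ℝ) - 1 with hudef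
  have hpinv : p * (1/p) = 1 := by field_simp
  have hu0 : 0 ≤ u := by
    have := mul_le_mul_of_nonneg_left hNge hp0.le
    simp only [hudef]; nlinarith
  have hup : u ≤ p := by
    have := mul_lt_mul_of_pos_left hNlt hp0
    simp only [hudef]; nlinarith
  have hpN : p * (N:ℝ) = 1 + u := by simp [hudef]
  set w : ℝ := Real.log (1 + u) with hwdef
  have hw0 : 0 ≤ w := Real.log_nonneg (by linarith)
  have hM : M = L + w := by
    have hNne : (N:ℝ) ≠ 0 := by linarith
    have h := Real.log_mul hp0.ne' hNne
    rw [hpN] at h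
    simp only [hMdef, hwdef, hLdef]
    linarith
  -- log bounds
  have h1 : 2 * p * L ≤ 1 - p ^ 2 := by
    have hx : (1:ℝ) ≤ p⁻¹ := (one_le_inv_iff₀).2 ⟨hp0, by linarith⟩
    have hb := log_le_half_sub p⁻¹ hx
    rw [Real.log_inv, inv_inv] at hb
    have hpi : p * p⁻¹ = 1 := mul_inv_cancel₀ hp0.ne'
    nlinarith [mul_le_mul_of_nonneg_left hb (by positivity : (0:ℝ) ≤ 2 * p)]
  have h2 : 2 * (1 - p) * r ≤ p * (2 - p) := by
    have hx : (1:ℝ) ≤ (1-p)⁻¹ := (one_le_inv_iff₀).2 ⟨h1p, by linarith⟩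
    have hb := log_le_half_sub (1-p)⁻¹ hx
    rw [Real.log_inv, inv_inv] at hb
    have hpi : (1-p) * (1-p)⁻¹ = 1 := mul_inv_cancel₀ h1p.ne'
    nlinarith [mul_le_mul_of_nonneg_left hb (by positivity : (0:ℝ) ≤ 2 * (1 - p))]
  -- scalar inequality
  have h1' : p * L ≤ (1 - p/2) * (1 - p) := by
    nlinarith [mul_nonneg (by linarith : (0:ℝ) ≤ 1 - 2*p) (by linarith : (0:ℝ) ≤ 1 - p)]
  have scal : L * r ≤ (1 - p/2) * (p * L + (1 - p) * r) := by
    rcases le_or_gt L ((1 - p/2) * (1 - p)) with hc | hc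
    · nlinarith [mul_le_mul_of_nonneg_right hc hr.le,
        mul_nonneg (mul_nonneg hp0.le hL.le) (by linarith : (0:ℝ) ≤ 1 - p/2)]
    · nlinarith [mul_nonneg (sub_pos.2 hc).le (by linarith [h2] : (0:ℝ) ≤ p*(2-p) - 2*(1-p)*r),
        mul_nonneg (mul_nonneg hp0.le (by linarith : (0:ℝ) ≤ 1 - p/2))
          (by linarith [h1'] : (0:ℝ) ≤ (1 - p/2)*(1-p) - p*L),
        h1p]
  -- key inequality
  have hPLr : (0:ℝ) ≤ p * L + (1 - p) * r := by
    have := mul_nonneg hp0.le hL.le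
    have := mul_nonneg h1p.le hr.le
    linarith
  have hw' : u * (1 - p/2) ≤ w := by
    have hq2 := quad_le_log u hu0 (by linarith)
    simp only [hwdef]
    nlinarith [hq2, mul_le_mul_of_nonneg_left hup hu0]
  have key : u * L * r ≤ w * (p * L + (1 - p) * r) :=
    calc u * L * r = u * (L * r) := by ring
      _ ≤ u * ((1 - p/2) * (p * L + (1 - p) * r)) := mul_le_mul_of_nonneg_left scal hu0
      _ = (u * (1 - p/2)) * (p * L + (1 - p) * r) := by ring
      _ ≤ w * (p * L + (1 - p) * r) := mul_le_mul_of_nonneg_right hw' hPLr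
  -- G''
  have G'' : p * L * ((N:ℝ) * r + L - r) ≤ (L + w) * (r + p * (L - r)) := by
    have e1 : p * L * ((N:ℝ) * r + L - r) = (1 + u) * L * r + p * L * (L - r) := by
      linear_combination (L * r) * hpN
    have e3 : (L + w) * (r + p * (L - r))
        = L * r + p * L * (L - r) + w * (p * L + (1 - p) * r) := by ring
    rw [e1, e3]; nlinarith [key]
  -- denominators
  have hD1 : (0:ℝ) < ((N:ℝ) + 1) / 2 + (1 - q) / q := by
    have : (0:ℝ) < (1 - q) / q := div_pos (by linarith) hq0
    linarith
  have hD2 : (0:ℝ) < (N:ℝ) * q + 1 - q := by nlinarith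
  have hD3 : (0:ℝ) < q + p * (1 - q) := by nlinarith
  constructor
  · rw [ge_iff_le, div_le_div_iff₀ hD2 hD1]
    have hc : q * ((1 - q) / q) = 1 - q := by field_simp
    have hcM : M * (q * ((1 - q) / q)) = M * (1 - q) := by rw [hc]
    nlinarith [hcM, mul_nonneg (mul_nonneg hM0 hq0.le) (by linarith : (0:ℝ) ≤ (N:ℝ) - 1)]
  · rw [ge_iff_le, div_le_div_iff₀ hD3 hD2]
    rw [hlogp, hM]
    rw [← mul_le_mul_iff_right₀ (by positivity : (0:ℝ) < L * L)]
    calc L * L * (-(q * p * -L) * ((N:ℝ) * q + 1 - q))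
        = r * (p * L * ((N:ℝ) * r + L - r)) := by
          linear_combination (p * L * ((N:ℝ) * (q * L + r) + L - (q * L + r))) * hqL
      _ ≤ r * ((L + w) * (r + p * (L - r))) := mul_le_mul_of_nonneg_left G'' hr.le
      _ = L * L * (q * (L + w) * (q + p * (1 - q))) := by
          linear_combination (-((L + w) * ((1 - p) * (q * L + r) + p * L))) * hqL
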